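/- Let ω be a dilation invariant extended limit (extended to bounded complex sequences by ω(x+iy) = ω(x) + i·ω(y)), let α > 1, let A ∈ B(H), and let V be a positive compact operator with V ∈ M_{1,∞}. Let (e_k)_{k≥0} be an orthonormal basis of H consisting of eigenvectors of V with V e_k = μ(k,V)·e_k. Define, for n ≥ 0, x_n = (log(n+2))^{-1} · ∑_{k=0}^∞ μ(k,V)·exp(−((n+2)·μ(k,V))^{−α})·⟪A e_k, e_k⟫ and y_n = (log(n+2))^{-1} · ∑_{k=0}^∞ max(μ(k,V) − 1/(n+2), 0)·⟪A e_k, e_k⟫, with terms where μ(k,V) = 0 interpreted as 0. Then both sequences (x_n) and (y_n) are bounded and ω((x_n)) = ω((y_n)). -/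

import Mathlib

open scoped InnerProductSpace

noncomputable section

variable {H : Type} [NormedAddCommGroup H] [InnerProductSpace ℂ H] [CompleteSpace H]

/-- The `k`-th singular value (approximation number) of a bounded operator:
`μ(k,T) = inf {‖T - F‖ : rank F ≤ k}`. -/
def mu (T : H →L[ℂ] H) (k : ℕ) : ℝ :=
  sInf {c : ℝ | ∃ F : H →L[ℂ] H, LinearMap.rank (F : H →ₗ[ℂ] H) ≤ (k : Cardinal) ∧ ‖T - F‖ = c}

/-- Membership in the Macaev–Dixmier ideal `M_{1,∞}`. -/
def MemM1inf (T : H →L[ℂ] H) : Prop :=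
  IsCompactOperator ⇑T ∧ ∃ M : ℝ, ∀ n : ℕ,
    ∑ k ∈ Finset.range (n + 1), mu T k ≤ M * Real.log (2 + (n : ℝ))

/-- A bounded real sequence. -/
def BddSeq (x : ℕ → ℝ) : Prop := ∃ M : ℝ, ∀ n, |x n| ≤ M

/-- A dilation invariant extended limit. -/
structure ExtLimit (ω : (ℕ → ℝ) → ℝ) : Prop where
  map_add : ∀ x y : ℕ → ℝ, BddSeq x → BddSeq y → ω (x + y) = ω x + ω y
  map_smul : ∀ (c : ℝ) (x : ℕ → ℝ), BddSeq x → ω (c • x) = c * ω x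
  pos : ∀ x : ℕ → ℝ, BddSeq x → (∀ n, 0 ≤ x n) → 0 ≤ ω x
  extends_limit : ∀ (x : ℕ → ℝ) (l : ℝ), Filter.Tendsto x Filter.atTop (nhds l) → ω x = l
  dilation_invariant : ∀ x : ℕ → ℝ, BddSeq x → ∀ m : ℕ, 2 ≤ m → ω (fun j => x (j / m)) = ω x

/-- Extension of an extended limit to bounded complex sequences, `ω(x+iy) = ω(x) + i ω(y)`. -/
def extC (ω : (ℕ → ℝ) → ℝ) (x : ℕ → ℂ) : ℂ :=
  ((ω fun n => (x n).re : ℝ) : ℂ) + Complex.I * ((ω fun n => (x n).im : ℝ) : ℂ)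

/-- The sequence `x_n = (log(n+2))⁻¹ ∑_k μ(k,V) exp(−((n+2) μ(k,V))^{−α}) ⟪A e_k, e_k⟫`
(the eigenbasis form of `(log(n+2))⁻¹ Tr(A V e^{−((n+2)V)^{−α}})`). -/
def heatSeq (A V : H →L[ℂ] H) (e : HilbertBasis ℕ ℂ H) (α : ℝ) (n : ℕ) : ℂ :=
  (((Real.log ((n : ℝ) + 2))⁻¹ : ℝ) : ℂ) *
    ∑' k : ℕ, if mu V k = 0 then (0 : ℂ) else
      ((mu V k * Real.exp (-((((n : ℝ) + 2) * mu V k) ^ (-α))) : ℝ) : ℂ) * ⟪A (e k), e k⟫_ℂ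

/-- The sequence `y_n = (log(n+2))⁻¹ ∑_k (μ(k,V) − 1/(n+2))₊ ⟪A e_k, e_k⟫`
(the eigenbasis form of `(log(n+2))⁻¹ Tr(A (V − 1/(n+2))₊)`). -/
def cutSeq (A V : H →L[ℂ] H) (e : HilbertBasis ℕ ℂ H) (n : ℕ) : ℂ :=
  (((Real.log ((n : ℝ) + 2))⁻¹ : ℝ) : ℂ) *
    ∑' k : ℕ, ((max (mu V k - ((n : ℝ) + 2)⁻¹) 0 : ℝ) : ℂ) * ⟪A (e k), e k⟫_ℂ

namespace ST7

theorem bdd_of_bounds {x : ℕ → ℝ} {a b : ℝ} (h1 : ∀ n, a ≤ x n) (h2 : ∀ n, x n ≤ b) :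
    BddSeq x := by
  refine ⟨max (-a) b, fun n => abs_le.2 ⟨?_, le_max_of_le_right (h2 n)⟩⟩
  have h := h1 n
  have : -(max (-a) b) ≤ a := by
    have := le_max_left (-a) b; linarith
  linarith

theorem bdd_neg {x : ℕ → ℝ} (h : BddSeq x) : BddSeq (-x) := by
  obtain ⟨M, hM⟩ := h; exact ⟨M, fun n => by simpa using hM n⟩

theorem bdd_smul (c : ℝ) {x : ℕ → ℝ} (h : BddSeq x) : BddSeq (c • x) := by
  obtain ⟨M, hM⟩ := h
  refine ⟨|c| * M, fun n => ?_⟩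
  simp only [Pi.smul_apply, smul_eq_mul, abs_mul]
  exact mul_le_mul_of_nonneg_left (hM n) (abs_nonneg c)

theorem bdd_add {x y : ℕ → ℝ} (hx : BddSeq x) (hy : BddSeq y) : BddSeq (x + y) := by
  obtain ⟨M, hM⟩ := hx; obtain ⟨N, hN⟩ := hy
  exact ⟨M + N, fun n => le_trans (abs_add_le _ _) (add_le_add (hM n) (hN n))⟩

theorem bdd_sub {x y : ℕ → ℝ} (hx : BddSeq x) (hy : BddSeq y) : BddSeq (x - y) := by
  have := bdd_add hx (bdd_neg hy); simpa [sub_eq_add_neg] using this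

variable {ω : (ℕ → ℝ) → ℝ}

theorem omega_const (hω : ExtLimit ω) (c : ℝ) : ω (fun _ => c) = c :=
  hω.extends_limit _ c tendsto_const_nhds

theorem omega_neg (hω : ExtLimit ω) {x : ℕ → ℝ} (hx : BddSeq x) : ω (-x) = - ω x := by
  have h := hω.map_smul (-1) x hx
  simpa using h

theorem omega_sub (hω : ExtLimit ω) {x y : ℕ → ℝ} (hx : BddSeq x) (hy : BddSeq y) :
    ω (x - y) = ω x - ω y := by
  have h := hω.map_add x (-y) hx (bdd_neg hy)
  rw [show x + -y = x - y by ring] at h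
  rw [h, omega_neg hω hy]; ring

theorem omega_mono (hω : ExtLimit ω) {x y : ℕ → ℝ} (hx : BddSeq x) (hy : BddSeq y) (h : ∀ n, x n ≤ y n) :
    ω x ≤ ω y := by
  have h0 : 0 ≤ ω (y - x) := hω.pos _ (bdd_sub hy hx) (fun n => by simp [h n])
  rw [omega_sub hω hy hx] at h0; linarith

theorem omega_eq_of_tendsto_sub (hω : ExtLimit ω) {x y : ℕ → ℝ} (hx : BddSeq x) (hy : BddSeq y)
    (h : Filter.Tendsto (fun n => x n - y n) Filter.atTop (nhds 0)) : ω x = ω y := by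
  have h0 : ω (x - y) = 0 := hω.extends_limit _ 0 h
  rw [omega_sub hω hx hy] at h0; linarith

/-- |ω x| ≤ C ω z if |x| ≤ C z. -/
theorem omega_abs_le (hω : ExtLimit ω) {x z : ℕ → ℝ} (C : ℝ) (hx : BddSeq x) (hz : BddSeq z)
    (h : ∀ n, |x n| ≤ C * z n) : |ω x| ≤ C * ω z := by
  have hz' : BddSeq (C • z) := bdd_smul C hz
  have h1 : ω x ≤ C * ω z := by
    have := omega_mono hω hx hz' (fun n => le_trans (le_abs_self _) (h n))
    rwa [hω.map_smul C z hz] at this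
  have h2 : -(C * ω z) ≤ ω x := by
    have := omega_mono hω (bdd_neg hx) hz' (fun n => by
      have := (abs_le.1 (h n)).1
      simpa using neg_le.2 (by simpa using this))
    rw [hω.map_smul C z hz, omega_neg hω hx] at this
    linarith
  exact abs_le.2 ⟨h2, h1⟩

/-! elementary real lemmas -/

theorem log_le_sqrt {x : ℝ} (hx : 0 ≤ x) : Real.log x ≤ 2 * Real.sqrt x := by
  rcases eq_or_lt_of_le hx with h | h
  · simp [← h]
  · have hs : 0 < Real.sqrt x := Real.sqrt_pos.2 h
    have := Real.log_le_sub_one_of_pos hs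
    have h2 : Real.log (Real.sqrt x) = Real.log x / 2 := Real.log_sqrt hx
    nlinarith [Real.sqrt_nonneg x]

theorem log_le_rpow8 {x : ℝ} (hx : 0 < x) : Real.log x ≤ 8 * x ^ (8⁻¹ : ℝ) := by
  have h1 : Real.log (x ^ (8⁻¹ : ℝ)) = (8⁻¹ : ℝ) * Real.log x := Real.log_rpow hx _
  have h2 : Real.log (x ^ (8⁻¹ : ℝ)) ≤ x ^ (8⁻¹ : ℝ) - 1 :=
    Real.log_le_sub_one_of_pos (Real.rpow_pos_of_pos hx _)
  nlinarith [Real.rpow_pos_of_pos hx (8⁻¹ : ℝ)]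

theorem exp_neg_le_inv {x : ℝ} (hx : 0 < x) : Real.exp (-x) ≤ x⁻¹ := by
  rw [Real.exp_neg]
  exact inv_anti₀ hx (le_trans (by linarith) (Real.add_one_le_exp x))


def sdom (S : ℕ → ℝ) (k : ℕ) : ℝ := Real.sqrt ((k:ℝ)+1) * S k ^ 2

theorem sdom_nonneg {S : ℕ → ℝ} (hS0 : ∀ k, 0 ≤ S k) (k : ℕ) : 0 ≤ sdom S k :=
  mul_nonneg (Real.sqrt_nonneg _) (sq_nonneg _)


theorem summable_pow : Summable (fun k : ℕ => ((k:ℝ)+1) ^ (-(5/4) : ℝ)) := by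
  have h := Real.summable_one_div_nat_rpow.2 (show (1:ℝ) < 5/4 by norm_num)
  rw [← summable_nat_add_iff 1] at h
  refine h.congr fun n => ?_
  push_cast
  rw [Real.rpow_neg (by positivity), one_div]

theorem M_nonneg {S : ℕ → ℝ} {M : ℝ} (hS0 : ∀ k, 0 ≤ S k)
    (hps : ∀ n : ℕ, ∑ k ∈ Finset.range (n+1), S k ≤ M * Real.log (2+(n:ℝ))) : 0 ≤ M := by
  have h : S 0 ≤ M * Real.log 2 := by simpa using hps 0
  have h0 := hS0 0
  have hl : 0 < Real.log 2 := Real.log_pos (by norm_num)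
  nlinarith

theorem S_le {S : ℕ → ℝ} {M : ℝ}
    (hanti : ∀ {k l : ℕ}, k ≤ l → S l ≤ S k)
    (hps : ∀ n : ℕ, ∑ k ∈ Finset.range (n+1), S k ≤ M * Real.log (2+(n:ℝ))) (k : ℕ) :
    S k ≤ M * Real.log (2+(k:ℝ)) / ((k:ℝ)+1) := by
  have h1 : ((k:ℝ)+1) * S k ≤ ∑ j ∈ Finset.range (k+1), S j := by
    have : ∀ j ∈ Finset.range (k+1), S k ≤ S j := fun j hj =>
      hanti (Nat.lt_succ_iff.1 (Finset.mem_range.1 hj))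
    calc ((k:ℝ)+1) * S k = ∑ _j ∈ Finset.range (k+1), S k := by
          rw [Finset.sum_const, Finset.card_range, nsmul_eq_mul]; push_cast; ring
      _ ≤ _ := Finset.sum_le_sum this
  rw [le_div_iff₀ (by positivity)]
  calc S k * ((k:ℝ)+1) = ((k:ℝ)+1) * S k := by ring
    _ ≤ _ := h1
    _ ≤ _ := hps k

theorem sdom_summable {S : ℕ → ℝ} {M : ℝ} (hS0 : ∀ k, 0 ≤ S k) (hM0 : 0 ≤ M)
    (hSle : ∀ k, S k ≤ M * Real.log (2+(k:ℝ)) / ((k:ℝ)+1)) :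
    Summable (sdom S) := by
  refine Summable.of_nonneg_of_le (sdom_nonneg hS0) (fun k => ?_)
    ((summable_pow.mul_left (256*M^2)))
  set b : ℝ := (k:ℝ)+1 with hb
  have hb1 : (1:ℝ) ≤ b := by rw [hb]; linarith [Nat.cast_nonneg (α := ℝ) k]
  have hbpos : (0:ℝ) < b := by linarith
  -- S k ≤ 16 M b^{-7/8}
  have hlog : Real.log (2+(k:ℝ)) ≤ 16 * b ^ (8⁻¹ : ℝ) := by
    have h1 : Real.log (2+(k:ℝ)) ≤ 8 * (2+(k:ℝ)) ^ (8⁻¹ : ℝ) := log_le_rpow8 (by positivity)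
    have h2 : (2+(k:ℝ)) ^ (8⁻¹ : ℝ) ≤ (2*b) ^ (8⁻¹ : ℝ) := by
      apply Real.rpow_le_rpow (by positivity) (by rw [hb]; linarith [Nat.cast_nonneg (α := ℝ) k]) (by norm_num)
    have h3 : ((2:ℝ)*b) ^ (8⁻¹ : ℝ) = (2:ℝ) ^ (8⁻¹ : ℝ) * b ^ (8⁻¹ : ℝ) :=
      Real.mul_rpow (by norm_num) (le_of_lt hbpos)
    have h4 : (2:ℝ) ^ (8⁻¹ : ℝ) ≤ 2 := by
      calc (2:ℝ) ^ (8⁻¹ : ℝ) ≤ (2:ℝ) ^ (1 : ℝ) :=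
            Real.rpow_le_rpow_of_exponent_le (by norm_num) (by norm_num)
        _ = 2 := Real.rpow_one 2
    have h5 : (0:ℝ) ≤ b ^ (8⁻¹:ℝ) := Real.rpow_nonneg (le_of_lt hbpos) _
    nlinarith
  have hSk : S k ≤ 16 * M * b ^ (-(7/8) : ℝ) := by
    have h6 : b ^ (-(7/8) : ℝ) = b ^ (8⁻¹ : ℝ) / b := by
      rw [show (-(7/8) : ℝ) = 8⁻¹ - 1 by norm_num, Real.rpow_sub hbpos, Real.rpow_one]
    rw [h6]
    calc S k ≤ M * Real.log (2+(k:ℝ)) / b := hSle k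
      _ ≤ M * (16 * b ^ (8⁻¹ : ℝ)) / b := by
          exact (div_le_div_iff_of_pos_right hbpos).2 (mul_le_mul_of_nonneg_left hlog hM0)
      _ = 16 * M * (b ^ (8⁻¹ : ℝ) / b) := by ring
  have hsq : S k ^ 2 ≤ 256 * M^2 * b ^ (-(7/4) : ℝ) := by
    have h7 : (b ^ (-(7/8) : ℝ))^2 = b ^ (-(7/4) : ℝ) := by
      rw [← Real.rpow_natCast (b ^ (-(7/8) : ℝ)) 2, ← Real.rpow_mul (le_of_lt hbpos)]
      norm_num
    have := pow_le_pow_left₀ (hS0 k) hSk 2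
    rw [mul_pow, mul_pow] at this
    rw [h7] at this
    calc S k ^2 ≤ 16^2 * M^2 * b ^ (-(7/4):ℝ) := this
      _ = 256 * M^2 * b ^ (-(7/4):ℝ) := by norm_num
  have hsqrt : Real.sqrt b = b ^ ((1:ℝ)/2) := Real.sqrt_eq_rpow b
  have hfin : b ^ ((1:ℝ)/2) * b ^ (-(7/4) : ℝ) = b ^ (-(5/4) : ℝ) := by
    rw [← Real.rpow_add hbpos]; norm_num
  calc sdom S k = Real.sqrt b * S k ^2 := rfl
    _ ≤ Real.sqrt b * (256 * M^2 * b ^ (-(7/4) : ℝ)) := by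
        apply mul_le_mul_of_nonneg_left hsq (Real.sqrt_nonneg _)
    _ = 256*M^2 * (b ^ ((1:ℝ)/2) * b ^ (-(7/4) : ℝ)) := by rw [hsqrt]; ring
    _ = 256*M^2 * b ^ (-(5/4) : ℝ) := by rw [hfin]

theorem key {S : ℕ → ℝ} {M : ℝ} (hS0 : ∀ k, 0 ≤ S k)
    (hanti : ∀ {k l : ℕ}, k ≤ l → S l ≤ S k)
    (hps : ∀ n : ℕ, ∑ k ∈ Finset.range (n+1), S k ≤ M * Real.log (2+(n:ℝ)))
    (m : ℕ) (hm : 2 ≤ m) (F : ℕ → ℝ) (hF0 : ∀ k, 0 ≤ F k) (hFS : ∀ k, F k ≤ S k)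
    (hFq : ∀ k, F k ≤ (m:ℝ) * S k ^ 2) :
    Summable F ∧ ∑' k, F k ≤ 3 * M * Real.log m + ∑' k, sdom S k := by
  have hM0 : 0 ≤ M := M_nonneg hS0 hps
  have hsd : Summable (sdom S) := sdom_summable hS0 hM0 (S_le hanti hps)
  have hm1 : (1:ℝ) ≤ (m:ℝ) := by exact_mod_cast Nat.one_le_of_lt hm
  have hle_sdom : ∀ k, (m:ℝ) * S k ^2 ≤ (m:ℝ) * sdom S k := fun k => by
    apply mul_le_mul_of_nonneg_left ?_ (by linarith)
    unfold sdom
    have h1 : (1:ℝ) ≤ Real.sqrt ((k:ℝ)+1) := by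
      refine (Real.le_sqrt (by norm_num) (by positivity)).2 ?_
      have := Nat.cast_nonneg (α := ℝ) k; nlinarith
    nlinarith [sq_nonneg (S k)]
  have hsum : Summable F :=
    Summable.of_nonneg_of_le hF0 (fun k => le_trans (hFq k) (hle_sdom k)) (hsd.mul_left _)
  constructor
  · exact hsum
  have hmm1 : 1 ≤ m*m := Nat.one_le_iff_ne_zero.2 (Nat.mul_ne_zero (by omega) (by omega))
  -- head bound
  have hhead : ∑ k ∈ Finset.range (m*m), F k ≤ 3 * M * Real.log m := by
    have e1 : m*m-1+1 = m*m := Nat.succ_pred_eq_of_pos hmm1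
    have h1 : ∑ k ∈ Finset.range (m*m), F k ≤ ∑ k ∈ Finset.range (m*m), S k :=
      Finset.sum_le_sum (fun k _ => hFS k)
    have h2 := hps (m*m-1)
    rw [e1] at h2
    have e2 : (2+((m*m-1:ℕ):ℝ)) = (m:ℝ)*m+1 := by
      have : ((m*m-1:ℕ):ℝ) = (m:ℝ)*m-1 := by
        push_cast [Nat.cast_sub hmm1]; ring
      rw [this]; ring
    rw [e2] at h2
    have h3 : Real.log ((m:ℝ)*m+1) ≤ Real.log ((m:ℝ)^3) := by
      apply Real.log_le_log (by positivity)
      have : (2:ℝ) ≤ (m:ℝ) := by exact_mod_cast hm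
      nlinarith
    have h4 : Real.log ((m:ℝ)^3) = 3 * Real.log m := by
      rw [Real.log_pow]; norm_num
    calc ∑ k ∈ Finset.range (m*m), F k ≤ M * Real.log ((m:ℝ)*m+1) := le_trans h1 h2
      _ ≤ M * (3 * Real.log m) := by
          rw [← h4] at *; exact mul_le_mul_of_nonneg_left h3 hM0
      _ = 3 * M * Real.log m := by ring
  -- tail bound
  have htail : ∑' k, F (k + m*m) ≤ ∑' k, sdom S k := by
    have hsum' : Summable (fun k => F (k + m*m)) := (summable_nat_add_iff (m*m)).2 hsum
    have hsd' : Summable (fun k => sdom S (k + m*m)) := (summable_nat_add_iff (m*m)).2 hsd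
    have h1 : ∑' k, F (k + m*m) ≤ ∑' k, sdom S (k + m*m) := by
      apply Summable.tsum_le_tsum ?_ hsum' hsd'
      intro k
      have hms : (m:ℝ) ≤ Real.sqrt (((k + m*m:ℕ):ℝ)+1) := by
        rw [Real.le_sqrt (by positivity) (by positivity)]
        push_cast; nlinarith
      calc F (k+m*m) ≤ (m:ℝ) * S (k+m*m) ^2 := hFq _
        _ ≤ Real.sqrt (((k + m*m:ℕ):ℝ)+1) * S (k+m*m)^2 :=
            mul_le_mul_of_nonneg_right hms (sq_nonneg _)
        _ = sdom S (k+m*m) := rfl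
    have h2 : ∑' k, sdom S (k + m*m) ≤ ∑' k, sdom S k := by
      have := Summable.sum_add_tsum_nat_add (f := sdom S) (m*m) hsd
      have hh : 0 ≤ ∑ k ∈ Finset.range (m*m), sdom S k :=
        Finset.sum_nonneg (fun k _ => sdom_nonneg hS0 k)
      linarith
    linarith
  have := Summable.sum_add_tsum_nat_add (f := F) (m*m) hsum
  linarith



theorem sum_inv_sq (m : ℕ) : ∑ j ∈ Finset.range m, 1/((j:ℝ)+1)^2 ≤ 2 - 2/((m:ℝ)+1) := by
  induction m with
  | zero => norm_num
  | succ m ih =>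
    rw [Finset.sum_range_succ]
    have h1 : (0:ℝ) < (m:ℝ)+1 := by positivity
    have h2 : (0:ℝ) < (m:ℝ)+2 := by positivity
    have key : 1/((m:ℝ)+1)^2 ≤ 2/((m:ℝ)+1) - 2/((m:ℝ)+2) := by
      rw [div_sub_div _ _ (ne_of_gt h1) (ne_of_gt h2)]
      rw [div_le_div_iff₀ (by positivity) (by positivity)]
      nlinarith
    push_cast
    rw [show ((m:ℝ)+1+1) = (m:ℝ)+2 from by ring]
    linarith

theorem sum_min_le_3s {s : ℝ} (hs : 0 ≤ s) (m : ℕ) :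
    ∑ j ∈ Finset.range m, min (s^2) (1/((j:ℝ)+1)^2) ≤ 3*s := by
  rcases eq_or_lt_of_le hs with h0 | hs0
  · have : ∀ j ∈ Finset.range m, min (s^2) (1/((j:ℝ)+1)^2) = 0 := by
      intro j _; rw [← h0]; simp; positivity
    rw [Finset.sum_congr rfl this]; simp [← h0]
  rcases le_or_gt 1 s with h1 | h1
  · calc ∑ j ∈ Finset.range m, min (s^2) (1/((j:ℝ)+1)^2)
        ≤ ∑ j ∈ Finset.range m, 1/((j:ℝ)+1)^2 :=
          Finset.sum_le_sum (fun j _ => min_le_right _ _)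
      _ ≤ 2 - 2/((m:ℝ)+1) := sum_inv_sq m
      _ ≤ 3*s := by
          have : (0:ℝ) < 2/((m:ℝ)+1) := by positivity
          linarith
  · -- 0 < s < 1
    set J : ℕ := ⌊1/s⌋₊ with hJ
    have hs1 : (1:ℝ) ≤ 1/s := by rw [le_div_iff₀ hs0]; linarith
    have hJ1 : 1 ≤ J := by
      rw [hJ]; exact Nat.le_floor (by exact_mod_cast hs1)
    have hJle : (J:ℝ) ≤ 1/s := Nat.floor_le (by positivity)
    have hJgt : 1/s < (J:ℝ)+1 := Nat.lt_floor_add_one _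
    have hJs : 1/(J:ℝ) ≤ 2*s := by
      have hJpos : (0:ℝ) < J := by exact_mod_cast hJ1
      rw [div_le_iff₀ hJpos]
      have : 1/s ≤ 2*(J:ℝ) := by
        have hJR : (1:ℝ) ≤ (J:ℝ) := by exact_mod_cast hJ1
        linarith
      calc (1:ℝ) = s * (1/s) := by field_simp
        _ ≤ s * (2*J) := by apply mul_le_mul_of_nonneg_left this hs
        _ = 2*s*J := by ring
    rcases le_or_gt m J with hmJ | hJm
    · calc ∑ j ∈ Finset.range m, min (s^2) (1/((j:ℝ)+1)^2)
          ≤ ∑ _j ∈ Finset.range m, s^2 := Finset.sum_le_sum (fun j _ => min_le_left _ _)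
        _ = (m:ℝ) * s^2 := by rw [Finset.sum_const, Finset.card_range, nsmul_eq_mul]
        _ ≤ (J:ℝ) * s^2 := by
            apply mul_le_mul_of_nonneg_right _ (sq_nonneg s); exact_mod_cast hmJ
        _ ≤ (1/s) * s^2 := mul_le_mul_of_nonneg_right hJle (sq_nonneg s)
        _ = s := by field_simp
        _ ≤ 3*s := by linarith
    · have hsplit : ∑ j ∈ Finset.range J, min (s^2) (1/((j:ℝ)+1)^2)
          + ∑ j ∈ Finset.Ico J m, min (s^2) (1/((j:ℝ)+1)^2)
          = ∑ j ∈ Finset.range m, min (s^2) (1/((j:ℝ)+1)^2) := by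
        simp only [Finset.range_eq_Ico]
        exact Finset.sum_Ico_consecutive _ (Nat.zero_le J) hJm.le
      have hfirst : ∑ j ∈ Finset.range J, min (s^2) (1/((j:ℝ)+1)^2) ≤ s := by
        calc ∑ j ∈ Finset.range J, min (s^2) (1/((j:ℝ)+1)^2)
            ≤ ∑ _j ∈ Finset.range J, s^2 := Finset.sum_le_sum (fun j _ => min_le_left _ _)
          _ = (J:ℝ) * s^2 := by rw [Finset.sum_const, Finset.card_range, nsmul_eq_mul]
          _ ≤ (1/s) * s^2 := mul_le_mul_of_nonneg_right hJle (sq_nonneg s)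
          _ = s := by field_simp
      have hsecond : ∑ j ∈ Finset.Ico J m, min (s^2) (1/((j:ℝ)+1)^2) ≤ 2*s := by
        have htel : ∑ j ∈ Finset.Ico J m, (1/(j:ℝ) - 1/((j:ℝ)+1)) ≤ 1/(J:ℝ) := by
          rw [Finset.sum_Ico_eq_sum_range]
          have : ∀ i, (1/((J+i:ℕ):ℝ) - 1/(((J+i:ℕ):ℝ)+1))
              = (fun i:ℕ => 1/((J+i:ℕ):ℝ)) i - (fun i:ℕ => 1/((J+i:ℕ):ℝ)) (i+1) := by
            intro i; push_cast; ring_nf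
          calc ∑ i ∈ Finset.range (m-J), (1/(((J+i:ℕ)):ℝ) - 1/(((J+i:ℕ):ℝ)+1))
              = (1/((J:ℝ)) - 1/(((J+(m-J):ℕ)):ℝ)) := by
                rw [Finset.sum_congr rfl (fun i _ => this i), Finset.sum_range_sub']
                simp
            _ ≤ 1/(J:ℝ) := by
                have : (0:ℝ) ≤ 1/(((J+(m-J):ℕ)):ℝ) := by positivity
                linarith
        calc ∑ j ∈ Finset.Ico J m, min (s^2) (1/((j:ℝ)+1)^2)
            ≤ ∑ j ∈ Finset.Ico J m, (1/(j:ℝ) - 1/((j:ℝ)+1)) := by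
              apply Finset.sum_le_sum
              intro j hj
              have hj1 : J ≤ j := (Finset.mem_Ico.1 hj).1
              have hjpos : (0:ℝ) < j := by
                have : 1 ≤ j := le_trans hJ1 hj1
                exact_mod_cast this
              have : min (s^2) (1/((j:ℝ)+1)^2) ≤ 1/((j:ℝ)+1)^2 := min_le_right _ _
              have h2 : 1/((j:ℝ)+1)^2 ≤ 1/((j:ℝ)*((j:ℝ)+1)) := by
                apply div_le_div_of_nonneg_left (by norm_num) (by positivity)
                nlinarith
              have h3 : 1/((j:ℝ)*((j:ℝ)+1)) = 1/(j:ℝ) - 1/((j:ℝ)+1) := by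
                field_simp; ring
              linarith
          _ ≤ 1/(J:ℝ) := htel
          _ ≤ 2*s := hJs
      linarith

def phi (S : ℕ → ℝ) (m : ℕ) : ℝ := ∑' k, min (((m:ℝ) * S k)^2) 1

def II (S : ℕ → ℝ) (m : ℕ) : ℝ := ∑ j ∈ Finset.range m, phi S (j+1) / ((j:ℝ)+1)^2

theorem sq_le_sdom (S : ℕ → ℝ) (k : ℕ) : S k ^ 2 ≤ sdom S k := by
  unfold sdom
  have h1 : (1:ℝ) ≤ Real.sqrt ((k:ℝ)+1) := by
    refine (Real.le_sqrt (by norm_num) (by positivity)).2 ?_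
    have := Nat.cast_nonneg (α := ℝ) k; nlinarith
  nlinarith [sq_nonneg (S k)]

theorem min_div_helper {c x y : ℝ} (hc : 0 < c) : min (c*x) y / c = min x (y/c) := by
  rcases le_total (c*x) y with h | h
  · rw [min_eq_left h, min_eq_left (by rw [le_div_iff₀ hc]; linarith [mul_comm c x])]
    field_simp
  · rw [min_eq_right h, min_eq_right (by rw [div_le_iff₀ hc]; linarith [mul_comm c x])]

section
variable {S : ℕ → ℝ} {M : ℝ}

theorem phi_term_nonneg (S : ℕ → ℝ) (m k : ℕ) : 0 ≤ min (((m:ℝ) * S k)^2) 1 :=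
  le_min (sq_nonneg _) zero_le_one

theorem phi_nonneg (S : ℕ → ℝ) (m : ℕ) : 0 ≤ phi S m :=
  tsum_nonneg (fun k => phi_term_nonneg S m k)

theorem phi_summable (hS0 : ∀ k, 0 ≤ S k)
    (hanti : ∀ {k l : ℕ}, k ≤ l → S l ≤ S k)
    (hps : ∀ n : ℕ, ∑ k ∈ Finset.range (n+1), S k ≤ M * Real.log (2+(n:ℝ))) (m : ℕ) :
    Summable (fun k => min (((m:ℝ) * S k)^2) 1) := by
  have hsd : Summable (sdom S) := sdom_summable hS0 (M_nonneg hS0 hps) (S_le hanti hps)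
  refine Summable.of_nonneg_of_le (fun k => phi_term_nonneg S m k) (fun k => ?_)
    (hsd.mul_left ((m:ℝ)^2))
  calc min (((m:ℝ) * S k)^2) 1 ≤ ((m:ℝ) * S k)^2 := min_le_left _ _
    _ = (m:ℝ)^2 * S k^2 := by ring
    _ ≤ (m:ℝ)^2 * sdom S k := mul_le_mul_of_nonneg_left (sq_le_sdom S k) (sq_nonneg _)

theorem phi_mono (hS0 : ∀ k, 0 ≤ S k)
    (hanti : ∀ {k l : ℕ}, k ≤ l → S l ≤ S k)
    (hps : ∀ n : ℕ, ∑ k ∈ Finset.range (n+1), S k ≤ M * Real.log (2+(n:ℝ)))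
    {m m' : ℕ} (h : m ≤ m') : phi S m ≤ phi S m' := by
  refine Summable.tsum_le_tsum (fun k => ?_) (phi_summable hS0 hanti hps m) (phi_summable hS0 hanti hps m')
  apply min_le_min _ le_rfl
  apply pow_le_pow_left₀ (mul_nonneg (by positivity) (hS0 k))
  exact mul_le_mul_of_nonneg_right (by exact_mod_cast h) (hS0 k)

theorem phi_le (hS0 : ∀ k, 0 ≤ S k)
    (hanti : ∀ {k l : ℕ}, k ≤ l → S l ≤ S k)
    (hps : ∀ n : ℕ, ∑ k ∈ Finset.range (n+1), S k ≤ M * Real.log (2+(n:ℝ)))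
    {m : ℕ} (hm : 2 ≤ m) :
    phi S m ≤ (m:ℝ) * (3*M*Real.log m + ∑' k, sdom S k) := by
  have hm0 : (0:ℝ) < (m:ℝ) := by positivity
  obtain ⟨hsumF, hbF⟩ := key hS0 hanti hps m hm
      (fun k => min (((m:ℝ) * S k)^2) 1 / (m:ℝ))
      (fun k => div_nonneg (phi_term_nonneg S m k) hm0.le)
      (fun k => by
        rw [div_le_iff₀ hm0]
        rcases le_total ((m:ℝ) * S k) 1 with h | h
        · calc min (((m:ℝ) * S k)^2) 1 ≤ ((m:ℝ) * S k)^2 := min_le_left _ _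
            _ ≤ ((m:ℝ) * S k) * 1 := by nlinarith [mul_nonneg hm0.le (hS0 k)]
            _ = S k * (m:ℝ) := by ring
        · calc min (((m:ℝ) * S k)^2) 1 ≤ 1 := min_le_right _ _
            _ ≤ (m:ℝ) * S k := h
            _ = S k * (m:ℝ) := by ring)
      (fun k => by
        rw [div_le_iff₀ hm0]
        calc min (((m:ℝ) * S k)^2) 1 ≤ ((m:ℝ) * S k)^2 := min_le_left _ _
          _ = ((m:ℝ) * S k^2) * (m:ℝ) := by ring)
  have he : phi S m = (m:ℝ) * ∑' k, min (((m:ℝ) * S k)^2) 1 / (m:ℝ) := by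
    rw [tsum_div_const]; field_simp [phi]
    simp only [phi, mul_pow]
  rw [he]
  exact mul_le_mul_of_nonneg_left hbF hm0.le

theorem II_nonneg (S : ℕ → ℝ) (m : ℕ) : 0 ≤ II S m :=
  Finset.sum_nonneg (fun j _ => div_nonneg (phi_nonneg S _) (by positivity))

theorem II_mono {m m' : ℕ} (h : m ≤ m') : II S m ≤ II S m' :=
  Finset.sum_le_sum_of_subset_of_nonneg (Finset.range_subset_range.2 h)
    (fun j _ _ => div_nonneg (phi_nonneg S _) (by positivity))

theorem II_le (hS0 : ∀ k, 0 ≤ S k)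
    (hanti : ∀ {k l : ℕ}, k ≤ l → S l ≤ S k)
    (hps : ∀ n : ℕ, ∑ k ∈ Finset.range (n+1), S k ≤ M * Real.log (2+(n:ℝ)))
    {m : ℕ} (hm : 2 ≤ m) :
    II S m ≤ 3 * (3*M*Real.log m + ∑' k, sdom S k) := by
  -- swap the sums
  have hphij : ∀ j : ℕ, phi S (j+1) = ∑' k, min ((((j:ℝ)+1) * S k)^2) 1 := by
    intro j; unfold phi; simp only [Nat.cast_add, Nat.cast_one]
  have h1 : ∀ j ∈ Finset.range m, Summable
      (fun k => min ((((j:ℝ)+1) * S k)^2) 1 / ((j:ℝ)+1)^2) := by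
    intro j _
    have := (phi_summable hS0 hanti hps (j+1)).div_const (((j:ℝ)+1)^2)
    simpa only [Nat.cast_add, Nat.cast_one] using this
  have hswap : II S m = ∑' k, ∑ j ∈ Finset.range m, min (S k^2) (1/((j:ℝ)+1)^2) := by
    have h2 : II S m = ∑ j ∈ Finset.range m,
        ∑' k, min ((((j:ℝ)+1) * S k)^2) 1 / ((j:ℝ)+1)^2 := by
      unfold II
      refine Finset.sum_congr rfl (fun j _ => ?_)
      rw [tsum_div_const, hphij j]
    rw [h2, ← Summable.tsum_finsetSum h1]
    refine tsum_congr (fun k => Finset.sum_congr rfl (fun j _ => ?_))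
    have hc : (0:ℝ) < ((j:ℝ)+1)^2 := by positivity
    have e0 : min ((((j:ℝ)+1) * S k)^2) 1 = min (((j:ℝ)+1)^2 * S k^2) 1 := by
      rw [mul_pow]
    rw [e0, min_div_helper hc]
  obtain ⟨hsumF, hbF⟩ := key hS0 hanti hps m hm
      (fun k => (∑ j ∈ Finset.range m, min (S k^2) (1/((j:ℝ)+1)^2)) / 3)
      (fun k => by
        apply div_nonneg _ (by norm_num)
        exact Finset.sum_nonneg fun j _ => le_min (sq_nonneg _) (by positivity))
      (fun k => by
        rw [div_le_iff₀ (by norm_num : (0:ℝ) < 3)]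
        rw [mul_comm]
        exact sum_min_le_3s (hS0 k) m)
      (fun k => by
        rw [div_le_iff₀ (by norm_num : (0:ℝ) < 3)]
        calc ∑ j ∈ Finset.range m, min (S k^2) (1/((j:ℝ)+1)^2)
            ≤ ∑ _j ∈ Finset.range m, S k^2 :=
              Finset.sum_le_sum (fun j _ => min_le_left _ _)
          _ = (m:ℝ) * S k^2 := by rw [Finset.sum_const, Finset.card_range, nsmul_eq_mul]
          _ ≤ (m:ℝ) * S k^2 * 3 := by nlinarith [mul_nonneg (Nat.cast_nonneg (α:=ℝ) m) (sq_nonneg (S k))])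
  have he : (∑' k, ∑ j ∈ Finset.range m, min (S k^2) (1/((j:ℝ)+1)^2))
      = 3 * ∑' k, (∑ j ∈ Finset.range m, min (S k^2) (1/((j:ℝ)+1)^2)) / 3 := by
    rw [tsum_div_const]; ring
  rw [hswap, he]
  linarith
end

theorem tauber {S : ℕ → ℝ} {M : ℝ} (hS0 : ∀ k, 0 ≤ S k)
    (hanti : ∀ {k l : ℕ}, k ≤ l → S l ≤ S k)
    (hps : ∀ n : ℕ, ∑ k ∈ Finset.range (n+1), S k ≤ M * Real.log (2+(n:ℝ)))
    {m : ℕ} (hm : 1 ≤ m) :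
    phi S m / (m:ℝ) ≤ 4 * (II S (2*m) - II S m) := by
  have hm0 : (0:ℝ) < (m:ℝ) := by exact_mod_cast hm
  have hdiff : II S (2*m) - II S m = ∑ j ∈ Finset.Ico m (2*m), phi S (j+1) / ((j:ℝ)+1)^2 := by
    unfold II
    simp only [Finset.range_eq_Ico]
    rw [← Finset.sum_Ico_consecutive _ (Nat.zero_le m) (by omega : m ≤ 2*m)]
    ring
  have hterm : ∀ j ∈ Finset.Ico m (2*m),
      phi S m / ((2*(m:ℝ))^2) ≤ phi S (j+1) / ((j:ℝ)+1)^2 := by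
    intro j hj
    obtain ⟨hj1, hj2⟩ := Finset.mem_Ico.1 hj
    apply div_le_div₀ (phi_nonneg S (j+1)) (phi_mono hS0 hanti hps (by omega)) (by positivity)
    have : ((j:ℝ)+1) ≤ 2*(m:ℝ) := by exact_mod_cast by omega
    nlinarith [Nat.cast_nonneg (α := ℝ) j]
  have hsum : (m:ℝ) * (phi S m / ((2*(m:ℝ))^2)) ≤ ∑ j ∈ Finset.Ico m (2*m), phi S (j+1) / ((j:ℝ)+1)^2 := by
    have hcard : (Finset.Ico m (2*m)).card = m := by rw [Nat.card_Ico]; omega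
    calc (m:ℝ) * (phi S m / ((2*(m:ℝ))^2))
        = ∑ _j ∈ Finset.Ico m (2*m), phi S m / ((2*(m:ℝ))^2) := by
          rw [Finset.sum_const, hcard, nsmul_eq_mul]
      _ ≤ _ := Finset.sum_le_sum hterm
  have heq : phi S m / (m:ℝ) = 4 * ((m:ℝ) * (phi S m / ((2*(m:ℝ))^2))) := by
    field_simp; ring
  rw [hdiff, heq]
  exact mul_le_mul_of_nonneg_left hsum (by norm_num)

/-! pointwise heat kernel inequalities -/

section
variable {α c s : ℝ}

theorem E_le_one (hc : 0 < c) (hs : 0 ≤ s) : Real.exp (-((c*s) ^ (-α))) ≤ 1 := by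
  rw [Real.exp_le_one_iff]
  simp [Real.rpow_nonneg (mul_nonneg hc.le hs)]

theorem heat_le_lin (hc : 0 < c) (hs : 0 ≤ s) (hα1 : 1 ≤ α) :
    s * Real.exp (-((c*s) ^ (-α))) ≤ c * s^2 := by
  rcases eq_or_lt_of_le hs with h0 | hs0
  · rw [← h0]; norm_num
  have ht : 0 < c*s := mul_pos hc hs0
  rcases le_or_gt (c*s) 1 with h1 | h1
  · have hE : Real.exp (-((c*s) ^ (-α))) ≤ c*s := by
      have hx : (0:ℝ) < (c*s) ^ (-α) := Real.rpow_pos_of_pos ht _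
      have h2 : Real.exp (-((c*s) ^ (-α))) ≤ ((c*s) ^ (-α))⁻¹ := exp_neg_le_inv hx
      have h3 : ((c*s) ^ (-α))⁻¹ = (c*s) ^ α := by
        rw [Real.rpow_neg ht.le, inv_inv]
      have h4 : (c*s) ^ α ≤ (c*s) ^ (1:ℝ) :=
        Real.rpow_le_rpow_of_exponent_ge ht h1 hα1
      rw [Real.rpow_one] at h4
      linarith [h3 ▸ h2]
    calc s * Real.exp (-((c*s) ^ (-α))) ≤ s * (c*s) := mul_le_mul_of_nonneg_left hE hs
      _ = c * s^2 := by ring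
  · calc s * Real.exp (-((c*s) ^ (-α))) ≤ s * 1 := mul_le_mul_of_nonneg_left (E_le_one hc hs) hs
      _ = s := by ring
      _ ≤ s * (c*s) := by nlinarith
      _ = c * s^2 := by ring

theorem cut_le_heat (hc : 0 < c) (hs : 0 ≤ s) (hα1 : 1 ≤ α) :
    max (s - c⁻¹) 0 ≤ s * Real.exp (-((c*s) ^ (-α))) := by
  rcases le_or_gt s c⁻¹ with h1 | h1
  · rw [max_eq_right (by linarith)]
    exact mul_nonneg hs (Real.exp_nonneg _)
  · rw [max_eq_left (by linarith)]
    have hs0 : 0 < s := lt_trans (by positivity) h1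
    have ht : 1 < c*s := by
      rw [← mul_inv_cancel₀ (ne_of_gt hc)]
      exact mul_lt_mul_of_pos_left h1 hc
    have ht0 : 0 < c*s := by linarith
    set x : ℝ := (c*s) ^ (-α) with hx
    have hxpos : 0 < x := Real.rpow_pos_of_pos ht0 _
    have hE : 1 - x ≤ Real.exp (-x) := by
      have := Real.add_one_le_exp (-x); linarith
    have hsx : s * x ≤ c⁻¹ := by
      have e1 : s * x = c⁻¹ * ((c*s) ^ ((1:ℝ) + -α)) := by
        rw [Real.rpow_add ht0, Real.rpow_one, hx]
        field_simp
      have e2 : (c*s) ^ ((1:ℝ) + -α) ≤ 1 :=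
        Real.rpow_le_one_of_one_le_of_nonpos ht.le (by linarith)
      rw [e1]
      calc c⁻¹ * ((c*s) ^ ((1:ℝ) + -α)) ≤ c⁻¹ * 1 := by
            apply mul_le_mul_of_nonneg_left e2 (by positivity)
        _ = c⁻¹ := by ring
    calc s - c⁻¹ ≤ s - s*x := by linarith
      _ = s * (1-x) := by ring
      _ ≤ s * Real.exp (-x) := mul_le_mul_of_nonneg_left hE hs
      _ = s * Real.exp (-((c*s) ^ (-α))) := by rw [hx]

theorem heat_sub_cut_le (hc : 0 < c) (hs : 0 ≤ s) (hα1 : 1 ≤ α) :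
    s * Real.exp (-((c*s) ^ (-α))) - max (s - c⁻¹) 0 ≤ min ((c*s)^2) 1 / c := by
  rcases le_or_gt (c*s) 1 with h1 | h1
  · have hmin : min ((c*s)^2) 1 = (c*s)^2 := min_eq_left (by nlinarith [mul_nonneg hc.le hs])
    rw [hmin]
    have h2 : s * Real.exp (-((c*s) ^ (-α))) ≤ (c*s)^2/c := by
      rw [show (c*s)^2/c = c*s^2 from by field_simp]
      exact heat_le_lin hc hs hα1
    have h3 : 0 ≤ max (s - c⁻¹) 0 := le_max_right _ _
    linarith
  · have hmin : min ((c*s)^2) 1 = 1 := min_eq_right (by nlinarith)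
    rw [hmin]
    have h2 : c⁻¹ < s := by
      have := mul_lt_mul_of_pos_left h1 (inv_pos.2 hc)
      rw [show c⁻¹ * (c*s) = s from by field_simp] at this
      linarith [this]
    rw [max_eq_left (by linarith)]
    have h3 : s * Real.exp (-((c*s) ^ (-α))) ≤ s := by
      calc s * Real.exp (-((c*s) ^ (-α))) ≤ s * 1 :=
            mul_le_mul_of_nonneg_left (E_le_one hc hs) hs
        _ = s := by ring
    have : (1:ℝ)/c = c⁻¹ := one_div c
    linarith

end

end ST7

namespace ST7MU

theorem mu_nonneg {H : Type} [NormedAddCommGroup H] [InnerProductSpace ℂ H] [CompleteSpace H]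
    (T : H →L[ℂ] H) (k : ℕ) : 0 ≤ mu T k := by
  apply le_csInf
  · exact ⟨‖T - 0‖, 0, by simp, rfl⟩
  · rintro b ⟨F, -, rfl⟩; exact norm_nonneg _

theorem mu_antitone {H : Type} [NormedAddCommGroup H] [InnerProductSpace ℂ H] [CompleteSpace H]
    (T : H →L[ℂ] H) {k l : ℕ} (h : k ≤ l) : mu T l ≤ mu T k := by
  apply csInf_le_csInf
  · exact ⟨0, by rintro b ⟨F, -, rfl⟩; exact norm_nonneg _⟩
  · exact ⟨‖T - 0‖, 0, by simp, rfl⟩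
  · rintro b ⟨F, hF, rfl⟩
    exact ⟨F, le_trans hF (by exact_mod_cast Nat.cast_le.2 h), rfl⟩

end ST7MU


namespace ST7

theorem key2aux (M C0 x sx lx : ℝ) (hM0 : 0 ≤ M) (hC0nn : 0 ≤ C0) (hx6 : 6 ≤ x)
    (hsxx : sx ≤ x) (t3 : M*(lx*sx) ≤ M*(2*x)) (t4 : C0*sx ≤ C0*x) :
    2*(3*M*lx + C0) * sx ≤ (48*M+8*C0)*(x-3) := by
  nlinarith [mul_nonneg hM0 (show (0:ℝ) ≤ x - 4 by linarith),
    mul_nonneg hC0nn (show (0:ℝ) ≤ x - 4 by linarith)]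

set_option maxHeartbeats 1000000 in
theorem main (ω : (ℕ → ℝ) → ℝ) (hω : ExtLimit ω) (α : ℝ) (hα : 1 < α)
    (S : ℕ → ℝ) (M : ℝ)
    (hS0 : ∀ k, 0 ≤ S k)
    (hanti : ∀ {k l : ℕ}, k ≤ l → S l ≤ S k)
    (hps : ∀ n : ℕ, ∑ k ∈ Finset.range (n+1), S k ≤ M * Real.log (2+(n:ℝ)))
    (a : ℕ → ℂ) (R : ℝ) (ha : ∀ k, ‖a k‖ ≤ R) :
    (∃ B : ℝ, ∀ n : ℕ, ‖(((Real.log ((n : ℝ) + 2))⁻¹ : ℝ) : ℂ) *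
        ∑' k : ℕ, (if S k = 0 then (0 : ℂ) else
          ((S k * Real.exp (-((((n : ℝ) + 2) * S k) ^ (-α))) : ℝ) : ℂ) * a k)‖ ≤ B) ∧
    (∃ B : ℝ, ∀ n : ℕ, ‖(((Real.log ((n : ℝ) + 2))⁻¹ : ℝ) : ℂ) *
        ∑' k : ℕ, ((max (S k - ((n : ℝ) + 2)⁻¹) 0 : ℝ) : ℂ) * a k‖ ≤ B) ∧
    extC ω (fun n => (((Real.log ((n : ℝ) + 2))⁻¹ : ℝ) : ℂ) *
        ∑' k : ℕ, (if S k = 0 then (0 : ℂ) else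
          ((S k * Real.exp (-((((n : ℝ) + 2) * S k) ^ (-α))) : ℝ) : ℂ) * a k))
      = extC ω (fun n => (((Real.log ((n : ℝ) + 2))⁻¹ : ℝ) : ℂ) *
        ∑' k : ℕ, ((max (S k - ((n : ℝ) + 2)⁻¹) 0 : ℝ) : ℂ) * a k) := by
  have hα1 : (1:ℝ) ≤ α := hα.le
  have hR : (0:ℝ) ≤ R := le_trans (norm_nonneg (a 0)) (ha 0)
  have hc : ∀ n : ℕ, (0:ℝ) < (n:ℝ)+2 := fun n => by positivity
  have hlog2 : (0:ℝ) < Real.log 2 := Real.log_pos (by norm_num)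
  have hL : ∀ n : ℕ, Real.log 2 ≤ Real.log ((n:ℝ)+2) := fun n =>
    Real.log_le_log (by norm_num) (by linarith [Nat.cast_nonneg (α := ℝ) n])
  have hLpos : ∀ n : ℕ, 0 < Real.log ((n:ℝ)+2) := fun n => lt_of_lt_of_le hlog2 (hL n)
  have hM0 : 0 ≤ M := M_nonneg hS0 hps
  set C0 : ℝ := ∑' k, sdom S k with hC0
  have hsd : Summable (sdom S) := sdom_summable hS0 hM0 (S_le hanti hps)
  have hC0nn : 0 ≤ C0 := tsum_nonneg (sdom_nonneg hS0)
  -- the real sequences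
  set X : ℕ → ℕ → ℝ := fun n k => S k * Real.exp (-((((n:ℝ)+2) * S k) ^ (-α))) with hXdef
  set Y : ℕ → ℕ → ℝ := fun n k => max (S k - ((n:ℝ)+2)⁻¹) 0 with hYdef
  have hX0 : ∀ n k, 0 ≤ X n k := fun n k => mul_nonneg (hS0 k) (Real.exp_nonneg _)
  have hY0 : ∀ n k, 0 ≤ Y n k := fun n k => le_max_right _ _
  have hYX : ∀ n k, Y n k ≤ X n k := fun n k => cut_le_heat (hc n) (hS0 k) hα1
  have hXS : ∀ n k, X n k ≤ S k := fun n k => by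
    calc X n k ≤ S k * 1 := mul_le_mul_of_nonneg_left (E_le_one (hc n) (hS0 k)) (hS0 k)
      _ = S k := mul_one _
  have hXq : ∀ n k, X n k ≤ ((n:ℝ)+2) * S k^2 := fun n k => heat_le_lin (hc n) (hS0 k) hα1
  have hYS : ∀ n k, Y n k ≤ S k := fun n k =>
    max_le (sub_le_self _ (inv_nonneg.2 (hc n).le)) (hS0 k)
  have hYq : ∀ n k, Y n k ≤ ((n:ℝ)+2) * S k^2 := fun n k => le_trans (hYX n k) (hXq n k)
  -- key bounds
  have hkeyX : ∀ n : ℕ, Summable (X n) ∧ ∑' k, X n k ≤ 3*M*Real.log ((n:ℝ)+2) + C0 := by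
    intro n
    have h := key hS0 hanti hps (n+2) (by omega) (X n) (hX0 n) (hXS n)
      (fun k => by push_cast; exact hXq n k)
    push_cast at h
    exact h
  have hkeyY : ∀ n : ℕ, Summable (Y n) ∧ ∑' k, Y n k ≤ 3*M*Real.log ((n:ℝ)+2) + C0 := by
    intro n
    have h := key hS0 hanti hps (n+2) (by omega) (Y n) (hY0 n) (hYS n)
      (fun k => by push_cast; exact hYq n k)
    push_cast at h
    exact h
  -- G bound by phi
  have hsmin : ∀ n : ℕ, Summable (fun k => min ((((n:ℝ)+2) * S k)^2) 1) := by
    intro n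
    have := phi_summable hS0 hanti hps (n+2)
    simpa using this
  have hphin : ∀ n : ℕ, phi S (n+2) = ∑' k, min ((((n:ℝ)+2) * S k)^2) 1 := by
    intro n; unfold phi; push_cast; rfl
  have hkeyG : ∀ n : ℕ, ∑' k, (X n k - Y n k) ≤ phi S (n+2) / ((n:ℝ)+2) := by
    intro n
    have hsub : Summable (fun k => X n k - Y n k) := (hkeyX n).1.sub (hkeyY n).1
    have h1 : ∑' k, (X n k - Y n k) ≤ ∑' k, min ((((n:ℝ)+2) * S k)^2) 1 / ((n:ℝ)+2) := by
      refine Summable.tsum_le_tsum (fun k => ?_) hsub ((hsmin n).div_const _)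
      exact heat_sub_cut_le (hc n) (hS0 k) hα1
    rw [tsum_div_const, ← hphin n] at h1
    exact h1
  have hG0 : ∀ n, (0:ℝ) ≤ ∑' k, (X n k - Y n k) := fun n =>
    tsum_nonneg (fun k => sub_nonneg.2 (hYX n k))
  -- D sequence
  set D : ℕ → ℝ := fun n => (Real.log ((n:ℝ)+2))⁻¹ * ∑' k, (X n k - Y n k) with hDdef
  have hD0 : ∀ n, 0 ≤ D n := fun n => mul_nonneg (inv_nonneg.2 (hLpos n).le) (hG0 n)
  -- u, v sequences
  set u : ℕ → ℝ := fun n => II S (n+2) * (Real.log ((n:ℝ)+2))⁻¹ with hudef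
  set v : ℕ → ℝ := fun n => II S (2*(n+2)) * (Real.log ((n:ℝ)+2))⁻¹ with hvdef
  have hDle : ∀ n, D n ≤ 4*(v n - u n) := by
    intro n
    have ht := tauber hS0 hanti hps (m := n+2) (by omega)
    have htc : phi S (n+2) / ((n:ℝ)+2) ≤ 4 * (II S (2*(n+2)) - II S (n+2)) := by
      have e : ((n+2:ℕ):ℝ) = (n:ℝ)+2 := by push_cast; ring
      rwa [e] at ht
    calc D n ≤ (Real.log ((n:ℝ)+2))⁻¹ * (phi S (n+2) / ((n:ℝ)+2)) :=
          mul_le_mul_of_nonneg_left (hkeyG n) (inv_nonneg.2 (hLpos n).le)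
      _ ≤ (Real.log ((n:ℝ)+2))⁻¹ * (4 * (II S (2*(n+2)) - II S (n+2))) :=
          mul_le_mul_of_nonneg_left htc (inv_nonneg.2 (hLpos n).le)
      _ = 4*(v n - u n) := by rw [hudef, hvdef]; ring
  -- boundedness
  have hIIb : ∀ m : ℕ, 2 ≤ m → II S m ≤ 3*(3*M*Real.log m + C0) := fun m hm =>
    II_le hS0 hanti hps hm
  have hub : ∀ n, u n ≤ 9*M + 3*C0/Real.log 2 := by
    intro n
    have h1 := hIIb (n+2) (by omega)
    have e : ((n+2:ℕ):ℝ) = (n:ℝ)+2 := by push_cast; ring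
    rw [e] at h1
    have h2 : u n ≤ (3*(3*M*Real.log ((n:ℝ)+2) + C0)) * (Real.log ((n:ℝ)+2))⁻¹ :=
      mul_le_mul_of_nonneg_right h1 (inv_nonneg.2 (hLpos n).le)
    have h3 : (3*(3*M*Real.log ((n:ℝ)+2) + C0)) * (Real.log ((n:ℝ)+2))⁻¹
        = 9*M + 3*C0/Real.log ((n:ℝ)+2) := by
      field_simp [(hLpos n).ne']; try ring
    rw [h3] at h2
    have h4 : 3*C0/Real.log ((n:ℝ)+2) ≤ 3*C0/Real.log 2 :=
      div_le_div_of_nonneg_left (by linarith) hlog2 (hL n)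
    linarith
  have hvb : ∀ n, v n ≤ 18*M + 3*C0/Real.log 2 := by
    intro n
    have h1 := hIIb (2*(n+2)) (by omega)
    have e : ((2*(n+2):ℕ):ℝ) = 2*((n:ℝ)+2) := by push_cast; ring
    rw [e] at h1
    have hlogle : Real.log (2*((n:ℝ)+2)) ≤ 2 * Real.log ((n:ℝ)+2) := by
      have h5 : Real.log (2*((n:ℝ)+2)) ≤ Real.log (((n:ℝ)+2)^2) := by
        apply Real.log_le_log (by positivity)
        nlinarith [Nat.cast_nonneg (α := ℝ) n]
      rw [Real.log_pow] at h5
      push_cast at h5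
      linarith
    have h1' : II S (2*(n+2)) ≤ 3*(3*M*(2*Real.log ((n:ℝ)+2)) + C0) := by
      have : 3*M*Real.log (2*((n:ℝ)+2)) ≤ 3*M*(2*Real.log ((n:ℝ)+2)) :=
        mul_le_mul_of_nonneg_left hlogle (by linarith)
      linarith
    have h2 : v n ≤ (3*(3*M*(2*Real.log ((n:ℝ)+2)) + C0)) * (Real.log ((n:ℝ)+2))⁻¹ :=
      mul_le_mul_of_nonneg_right h1' (inv_nonneg.2 (hLpos n).le)
    have h3 : (3*(3*M*(2*Real.log ((n:ℝ)+2)) + C0)) * (Real.log ((n:ℝ)+2))⁻¹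
        = 18*M + 3*C0/Real.log ((n:ℝ)+2) := by
      field_simp [(hLpos n).ne']; try ring
    rw [h3] at h2
    have h4 : 3*C0/Real.log ((n:ℝ)+2) ≤ 3*C0/Real.log 2 :=
      div_le_div_of_nonneg_left (by linarith) hlog2 (hL n)
    linarith
  have hu0 : ∀ n, 0 ≤ u n := fun n =>
    mul_nonneg (II_nonneg S _) (inv_nonneg.2 (hLpos n).le)
  have hv0 : ∀ n, 0 ≤ v n := fun n =>
    mul_nonneg (II_nonneg S _) (inv_nonneg.2 (hLpos n).le)
  have hubdd : BddSeq u := bdd_of_bounds hu0 hub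
  have hvbdd : BddSeq v := bdd_of_bounds hv0 hvb
  have huv : ∀ n, u n ≤ v n := fun n =>
    mul_le_mul_of_nonneg_right (II_mono (by omega)) (inv_nonneg.2 (hLpos n).le)
  have hDub : ∀ n, D n ≤ 4*(18*M + 3*C0/Real.log 2) := fun n =>
    le_trans (hDle n) (by nlinarith [hub n, hvb n, hu0 n, hv0 n])
  have hDbdd : BddSeq D := bdd_of_bounds hD0 hDub
  -- dilation invariance step
  have hσbdd : BddSeq (fun j => v (j/2)) := by
    obtain ⟨B, hB⟩ := hvbdd; exact ⟨B, fun j => hB (j/2)⟩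
  have htend : Filter.Tendsto (fun j => v (j/2) - u j) Filter.atTop (nhds 0) := by
    have hK1 : ∀ j : ℕ, v (j/2) - u j ≤ ((48*M+8*C0)/Real.log 2) * (Real.sqrt ((j:ℝ)+6))⁻¹
        + (3*Real.log 2*(3*M + C0/Real.log 2)) * (Real.log (((j/2 : ℕ):ℝ)+2))⁻¹ := by
      intro j
      set P : ℕ := j/2 with hP
      have hPj : 2*P ≤ j := by omega
      have hjP : j ≤ 2*P+1 := by omega
      have hPcast : (P:ℝ) ≤ (j:ℝ) := by exact_mod_cast Nat.div_le_self j 2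
      have hLPpos : 0 < Real.log ((P:ℝ)+2) := hLpos P
      have hLjpos : 0 < Real.log ((j:ℝ)+2) := hLpos j
      have hLPle : Real.log ((P:ℝ)+2) ≤ Real.log ((j:ℝ)+2) :=
        Real.log_le_log (by positivity) (by linarith)
      have hvP : v P = II S (2*(P+2)) * (Real.log ((P:ℝ)+2))⁻¹ := by simp only [hvdef]
      have huj : u j = II S (j+2) * (Real.log ((j:ℝ)+2))⁻¹ := by simp only [hudef]
      have hdec : v P - u j = (II S (2*(P+2)) - II S (j+2)) * (Real.log ((P:ℝ)+2))⁻¹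
          + II S (j+2) * ((Real.log ((P:ℝ)+2))⁻¹ - (Real.log ((j:ℝ)+2))⁻¹) := by
        rw [hvP, huj]; ring
      have hjle : j+2 ≤ 2*(P+2) := by omega
      -- Term A
      have hΔeq : II S (2*(P+2)) - II S (j+2)
          = ∑ i ∈ Finset.Ico (j+2) (2*(P+2)), phi S (i+1)/((i:ℝ)+1)^2 := by
        unfold II
        simp only [Finset.range_eq_Ico]
        rw [← Finset.sum_Ico_consecutive _ (Nat.zero_le (j+2)) hjle]
        ring
      have hlog6nn : (0:ℝ) ≤ Real.log ((j:ℝ)+6) :=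
        Real.log_nonneg (by linarith [Nat.cast_nonneg (α:=ℝ) j])
      have hB0 : 0 ≤ (3*M*Real.log ((j:ℝ)+6) + C0)/((j:ℝ)+3) := by
        apply div_nonneg _ (by positivity)
        have := mul_nonneg hM0 hlog6nn; linarith
      have hterm : ∀ i ∈ Finset.Ico (j+2) (2*(P+2)), phi S (i+1)/((i:ℝ)+1)^2
          ≤ (3*M*Real.log ((j:ℝ)+6) + C0)/((j:ℝ)+3) := by
        intro i hi
        obtain ⟨hi1, hi2⟩ := Finset.mem_Ico.1 hi
        have hii : (0:ℝ) < (i:ℝ)+1 := by positivity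
        have hic1 : ((j:ℝ)+3) ≤ (i:ℝ)+1 := by
          have : j+2 ≤ i := hi1
          have : (j:ℝ)+2 ≤ (i:ℝ) := by exact_mod_cast this
          linarith
        have hic2 : ((i:ℝ)+1) ≤ (j:ℝ)+6 := by
          have h5 : i ≤ j+4 := by omega
          have : (i:ℝ) ≤ (j:ℝ)+4 := by exact_mod_cast h5
          linarith
        have hphi : phi S (i+1) ≤ ((i:ℝ)+1)*(3*M*Real.log ((i:ℝ)+1) + C0) := by
          have h := phi_le hS0 hanti hps (m := i+1) (by omega)
          have e : ((i+1:ℕ):ℝ) = (i:ℝ)+1 := by push_cast; ring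
          rwa [e] at h
        have h1 : phi S (i+1)/((i:ℝ)+1)^2 ≤ (3*M*Real.log ((i:ℝ)+1) + C0)/((i:ℝ)+1) := by
          rw [div_le_div_iff₀ (by positivity) hii]
          calc phi S (i+1) * ((i:ℝ)+1)
              ≤ (((i:ℝ)+1)*(3*M*Real.log ((i:ℝ)+1) + C0)) * ((i:ℝ)+1) :=
                mul_le_mul_of_nonneg_right hphi hii.le
            _ = (3*M*Real.log ((i:ℝ)+1) + C0) * ((i:ℝ)+1)^2 := by ring
        refine le_trans h1 (div_le_div₀ ?_ ?_ (by positivity) hic1)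
        · have := mul_nonneg hM0 hlog6nn; linarith
        · have hll : Real.log ((i:ℝ)+1) ≤ Real.log ((j:ℝ)+6) :=
            Real.log_le_log (by positivity) hic2
          have := mul_le_mul_of_nonneg_left hll (by linarith : (0:ℝ) ≤ 3*M)
          linarith
      have hΔle : II S (2*(P+2)) - II S (j+2)
          ≤ 2*((3*M*Real.log ((j:ℝ)+6) + C0)/((j:ℝ)+3)) := by
        rw [hΔeq]
        have hcard : ((Finset.Ico (j+2) (2*(P+2))).card : ℝ) ≤ 2 := by
          rw [Nat.card_Ico]; exact_mod_cast (by omega : 2*(P+2) - (j+2) ≤ 2)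
        calc ∑ i ∈ Finset.Ico (j+2) (2*(P+2)), phi S (i+1)/((i:ℝ)+1)^2
            ≤ (Finset.Ico (j+2) (2*(P+2))).card
              • ((3*M*Real.log ((j:ℝ)+6) + C0)/((j:ℝ)+3)) :=
              Finset.sum_le_card_nsmul _ _ _ hterm
          _ = ((Finset.Ico (j+2) (2*(P+2))).card : ℝ)
              * ((3*M*Real.log ((j:ℝ)+6) + C0)/((j:ℝ)+3)) := nsmul_eq_mul _ _
          _ ≤ 2*((3*M*Real.log ((j:ℝ)+6) + C0)/((j:ℝ)+3)) :=
              mul_le_mul_of_nonneg_right hcard hB0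
      have hTermA : (II S (2*(P+2)) - II S (j+2)) * (Real.log ((P:ℝ)+2))⁻¹
          ≤ ((48*M+8*C0)/Real.log 2) * (Real.sqrt ((j:ℝ)+6))⁻¹ := by
        have hΔ0 : 0 ≤ II S (2*(P+2)) - II S (j+2) := by
          have := II_mono (S := S) hjle; linarith
        have hLPinv : (Real.log ((P:ℝ)+2))⁻¹ ≤ (Real.log 2)⁻¹ :=
          inv_anti₀ hlog2 (hL P)
        have step1 : (II S (2*(P+2)) - II S (j+2)) * (Real.log ((P:ℝ)+2))⁻¹
            ≤ (2*((3*M*Real.log ((j:ℝ)+6) + C0)/((j:ℝ)+3))) * (Real.log 2)⁻¹ :=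
          mul_le_mul hΔle hLPinv (inv_nonneg.2 hLPpos.le) (by linarith)
        refine le_trans step1 ?_
        set x : ℝ := (j:ℝ)+6 with hx
        have hx6 : (6:ℝ) ≤ x := by rw [hx]; linarith [Nat.cast_nonneg (α:=ℝ) j]
        have hxpos : (0:ℝ) < x := by linarith
        have hsx : 0 < Real.sqrt x := Real.sqrt_pos.2 hxpos
        have hxx : Real.sqrt x * Real.sqrt x = x := Real.mul_self_sqrt hxpos.le
        have hsx1 : 1 ≤ Real.sqrt x := by
          refine (Real.le_sqrt (by norm_num) hxpos.le).2 (by nlinarith)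
        have hsxx : Real.sqrt x ≤ x := by nlinarith
        have hlogx : Real.log x ≤ 2*Real.sqrt x := log_le_sqrt hxpos.le
        have hj3 : (j:ℝ)+3 = x - 3 := by rw [hx]; ring
        have hx3 : (0:ℝ) < x - 3 := by linarith
        have t1 : Real.log x * Real.sqrt x ≤ 2*x := by
          have := mul_le_mul_of_nonneg_right hlogx (Real.sqrt_nonneg x)
          nlinarith
        have t3 : M*(Real.log x*Real.sqrt x) ≤ M*(2*x) :=
          mul_le_mul_of_nonneg_left t1 hM0
        have t4 : C0*Real.sqrt x ≤ C0*x := mul_le_mul_of_nonneg_left hsxx hC0nn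
        have key2 : 2*(3*M*Real.log x + C0) * Real.sqrt x ≤ (48*M+8*C0)*(x-3) :=
          key2aux M C0 x (Real.sqrt x) (Real.log x) hM0 hC0nn hx6 hsxx t3 t4
        have e1 : (2*((3*M*Real.log x + C0)/((j:ℝ)+3))) * (Real.log 2)⁻¹
            = (2*(3*M*Real.log x + C0))/((x-3)*Real.log 2) := by
          rw [hj3]; field_simp
        have e2 : ((48*M+8*C0)/Real.log 2) * (Real.sqrt x)⁻¹
            = (48*M+8*C0)/(Real.log 2*Real.sqrt x) := by
          field_simp [ne_of_gt hsx, ne_of_gt hlog2]; try ring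
        rw [e1, e2, div_le_div_iff₀ (mul_pos hx3 hlog2) (mul_pos hlog2 hsx)]
        nlinarith [mul_le_mul_of_nonneg_right key2 hlog2.le]
      -- Term B
      have hIIj : II S (j+2) ≤ 3*(3*M*Real.log ((j:ℝ)+2) + C0) := by
        have h := hIIb (j+2) (by omega)
        have e : ((j+2:ℕ):ℝ) = (j:ℝ)+2 := by push_cast; ring
        rwa [e] at h
      have hII0 : 0 ≤ II S (j+2) := II_nonneg S _
      have hinv0 : 0 ≤ (Real.log ((P:ℝ)+2))⁻¹ - (Real.log ((j:ℝ)+2))⁻¹ := by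
        have := inv_anti₀ hLPpos hLPle; linarith
      have hlogdiff : Real.log ((j:ℝ)+2) - Real.log ((P:ℝ)+2) ≤ Real.log 2 := by
        have hcst : (j:ℝ)+2 ≤ 2*((P:ℝ)+2) := by
          have : (j:ℝ) ≤ 2*(P:ℝ)+1 := by exact_mod_cast hjP
          linarith
        have h1 : Real.log ((j:ℝ)+2) ≤ Real.log (2*((P:ℝ)+2)) :=
          Real.log_le_log (by positivity) hcst
        rw [Real.log_mul (by norm_num) (by positivity)] at h1
        linarith
      have hinveq : (Real.log ((P:ℝ)+2))⁻¹ - (Real.log ((j:ℝ)+2))⁻¹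
          = (Real.log ((j:ℝ)+2) - Real.log ((P:ℝ)+2))
            * (Real.log ((P:ℝ)+2) * Real.log ((j:ℝ)+2))⁻¹ := by
        field_simp
      have hLjnn : 0 ≤ Real.log ((j:ℝ)+2) := hLjpos.le
      have hTermB : II S (j+2) * ((Real.log ((P:ℝ)+2))⁻¹ - (Real.log ((j:ℝ)+2))⁻¹)
          ≤ (3*Real.log 2*(3*M + C0/Real.log 2)) * (Real.log ((P:ℝ)+2))⁻¹ := by
        have hb1 : (Real.log ((P:ℝ)+2))⁻¹ - (Real.log ((j:ℝ)+2))⁻¹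
            ≤ Real.log 2 * (Real.log ((P:ℝ)+2) * Real.log ((j:ℝ)+2))⁻¹ := by
          rw [hinveq]
          exact mul_le_mul_of_nonneg_right hlogdiff
            (inv_nonneg.2 (mul_pos hLPpos hLjpos).le)
        have hb2 : 0 ≤ 3*(3*M*Real.log ((j:ℝ)+2) + C0) := by
          have := mul_nonneg hM0 hLjnn; linarith
        have step1 : II S (j+2) * ((Real.log ((P:ℝ)+2))⁻¹ - (Real.log ((j:ℝ)+2))⁻¹)
            ≤ (3*(3*M*Real.log ((j:ℝ)+2) + C0))
              * (Real.log 2 * (Real.log ((P:ℝ)+2) * Real.log ((j:ℝ)+2))⁻¹) :=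
          mul_le_mul hIIj hb1 hinv0 hb2
        refine le_trans step1 ?_
        have e3 : (3*(3*M*Real.log ((j:ℝ)+2) + C0))
            * (Real.log 2 * (Real.log ((P:ℝ)+2) * Real.log ((j:ℝ)+2))⁻¹)
            = (3*Real.log 2*(3*M + C0/Real.log ((j:ℝ)+2))) * (Real.log ((P:ℝ)+2))⁻¹ := by
          field_simp
        rw [e3]
        apply mul_le_mul_of_nonneg_right _ (inv_nonneg.2 hLPpos.le)
        have h4 : C0/Real.log ((j:ℝ)+2) ≤ C0/Real.log 2 :=
          div_le_div_of_nonneg_left hC0nn hlog2 (hL j)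
        exact mul_le_mul_of_nonneg_left (by linarith) (by linarith)
      rw [hdec]
      exact add_le_add hTermA hTermB
    have h0 : ∀ j : ℕ, 0 ≤ v (j/2) - u j := by
      intro j
      have h1 : u j ≤ v (j/2) := by
        simp only [hudef, hvdef]
        have hmono : II S (j+2) ≤ II S (2*(j/2+2)) := II_mono (by omega)
        have hinv : (Real.log ((j:ℝ)+2))⁻¹ ≤ (Real.log (((j/2:ℕ):ℝ)+2))⁻¹ := by
          apply inv_anti₀ (hLpos (j/2))
          apply Real.log_le_log (by positivity)
          have : ((j/2:ℕ):ℝ) ≤ (j:ℝ) := by exact_mod_cast Nat.div_le_self j 2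
          linarith
        exact mul_le_mul hmono hinv (inv_nonneg.2 (hLpos j).le) (II_nonneg S _)
      linarith
    have hsq : Filter.Tendsto (fun j : ℕ => Real.sqrt ((j:ℝ)+6)) Filter.atTop Filter.atTop := by
      rw [Filter.tendsto_atTop_atTop]
      intro b
      refine ⟨⌈b^2⌉₊, fun j hj => ?_⟩
      rcases le_or_gt b 0 with hb | hb
      · exact le_trans hb (Real.sqrt_nonneg _)
      · refine (Real.le_sqrt hb.le (by positivity)).2 ?_
        have h1 : b^2 ≤ (⌈b^2⌉₊ : ℝ) := Nat.le_ceil _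
        have h2 : ((⌈b^2⌉₊ : ℕ):ℝ) ≤ (j:ℝ) := by exact_mod_cast hj
        linarith
    have t1 : Filter.Tendsto (fun j : ℕ => (Real.sqrt ((j:ℝ)+6))⁻¹) Filter.atTop (nhds 0) :=
      Filter.Tendsto.inv_tendsto_atTop hsq
    have hdiv : Filter.Tendsto (fun j : ℕ => j/2) Filter.atTop Filter.atTop := by
      rw [Filter.tendsto_atTop_atTop]
      intro b
      exact ⟨2*b, fun j hj => by omega⟩
    have hlogd : Filter.Tendsto (fun j : ℕ => Real.log (((j/2:ℕ):ℝ)+2)) Filter.atTop Filter.atTop := by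
      apply Real.tendsto_log_atTop.comp
      apply Filter.tendsto_atTop_add_const_right
      exact tendsto_natCast_atTop_atTop.comp hdiv
    have t2 : Filter.Tendsto (fun j : ℕ => (Real.log (((j/2:ℕ):ℝ)+2))⁻¹) Filter.atTop (nhds 0) :=
      Filter.Tendsto.inv_tendsto_atTop hlogd
    have tb := (t1.const_mul ((48*M+8*C0)/Real.log 2)).add
      (t2.const_mul (3*Real.log 2*(3*M + C0/Real.log 2)))
    rw [mul_zero, mul_zero, add_zero] at tb
    exact squeeze_zero h0 hK1 tb
  have hωvu : ω v = ω u := by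
    have hdil := hω.dilation_invariant v hvbdd 2 le_rfl
    rw [← hdil]
    exact omega_eq_of_tendsto_sub hω hσbdd hubdd htend
  have hωD : ω D = 0 := by
    have hvu : BddSeq (fun n => 4*(v n - u n)) := by
      have : (fun n => 4*(v n - u n)) = (4:ℝ) • (v - u) := by
        funext n; simp only [Pi.smul_apply, Pi.sub_apply, smul_eq_mul]; try ring
      rw [this]; exact bdd_smul 4 (bdd_sub hvbdd hubdd)
    have h1 : ω D ≤ ω (fun n => 4*(v n - u n)) := omega_mono hω hDbdd hvu hDle
    have h2 : ω (fun n => 4*(v n - u n)) = 4 * (ω v - ω u) := by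
      have e : (fun n => 4*(v n - u n)) = (4:ℝ) • (v - u) := by
        funext n; simp only [Pi.smul_apply, Pi.sub_apply, smul_eq_mul]; try ring
      rw [e, hω.map_smul 4 _ (bdd_sub hvbdd hubdd), omega_sub hω hvbdd hubdd]
    have h3 : 0 ≤ ω D := hω.pos D hDbdd hD0
    rw [hωvu] at h2
    have : ω (fun n => 4*(v n - u n)) = 0 := by rw [h2]; ring
    linarith
  -- complex assembly
  set xs : ℕ → ℂ := fun n => (((Real.log ((n : ℝ) + 2))⁻¹ : ℝ) : ℂ) *
      ∑' k : ℕ, (if S k = 0 then (0 : ℂ) else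
        ((S k * Real.exp (-((((n : ℝ) + 2) * S k) ^ (-α))) : ℝ) : ℂ) * a k) with hxsdef
  set ys : ℕ → ℂ := fun n => (((Real.log ((n : ℝ) + 2))⁻¹ : ℝ) : ℂ) *
      ∑' k : ℕ, ((max (S k - ((n : ℝ) + 2)⁻¹) 0 : ℝ) : ℂ) * a k with hysdef
  have hsumXC : ∀ n, Summable (fun k => ((X n k : ℝ) : ℂ) * a k) := by
    intro n
    apply Summable.of_norm
    refine Summable.of_nonneg_of_le (fun k => norm_nonneg _) (fun k => ?_)
      (((hkeyX n).1).mul_right R)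
    rw [norm_mul, Complex.norm_real, Real.norm_of_nonneg (hX0 n k)]
    exact mul_le_mul_of_nonneg_left (ha k) (hX0 n k)
  have hsumYC : ∀ n, Summable (fun k => ((Y n k : ℝ) : ℂ) * a k) := by
    intro n
    apply Summable.of_norm
    refine Summable.of_nonneg_of_le (fun k => norm_nonneg _) (fun k => ?_)
      (((hkeyY n).1).mul_right R)
    rw [norm_mul, Complex.norm_real, Real.norm_of_nonneg (hY0 n k)]
    exact mul_le_mul_of_nonneg_left (ha k) (hY0 n k)
  have hxrw : ∀ n, xs n = (((Real.log ((n : ℝ) + 2))⁻¹ : ℝ) : ℂ) *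
      ∑' k : ℕ, ((X n k : ℝ) : ℂ) * a k := by
    intro n
    simp only [hxsdef]
    congr 1
    refine tsum_congr (fun k => ?_)
    by_cases h : S k = 0
    · rw [if_pos h]
      have hX : X n k = 0 := by simp only [hXdef]; simp [h]
      rw [hX]; simp
    · rw [if_neg h]
  -- norm bounds
  have hnormtsum : ∀ (n : ℕ) (W : ℕ → ℕ → ℝ), (∀ k, 0 ≤ W n k) → Summable (W n) →
      Summable (fun k => ((W n k : ℝ) : ℂ) * a k) →
      ‖∑' k, ((W n k : ℝ) : ℂ) * a k‖ ≤ (∑' k, W n k) * R := by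
    intro n W hW0 hWs hWsc
    have hnorms : Summable (fun k => ‖((W n k : ℝ) : ℂ) * a k‖) := by
      refine Summable.of_nonneg_of_le (fun k => norm_nonneg _) (fun k => ?_) (hWs.mul_right R)
      rw [norm_mul, Complex.norm_real, Real.norm_of_nonneg (hW0 k)]
      exact mul_le_mul_of_nonneg_left (ha k) (hW0 k)
    calc ‖∑' k, ((W n k : ℝ) : ℂ) * a k‖ ≤ ∑' k, ‖((W n k : ℝ) : ℂ) * a k‖ :=
          norm_tsum_le_tsum_norm hnorms
      _ ≤ ∑' k, W n k * R := by
          refine Summable.tsum_le_tsum (fun k => ?_) hnorms (hWs.mul_right R)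
          rw [norm_mul, Complex.norm_real, Real.norm_of_nonneg (hW0 k)]
          exact mul_le_mul_of_nonneg_left (ha k) (hW0 k)
      _ = (∑' k, W n k) * R := tsum_mul_right
  have hcnorm : ∀ n : ℕ, ‖(((Real.log ((n : ℝ) + 2))⁻¹ : ℝ) : ℂ)‖ = (Real.log ((n:ℝ)+2))⁻¹ := by
    intro n
    rw [Complex.norm_real, Real.norm_of_nonneg (inv_nonneg.2 (hLpos n).le)]
  have hfinb : ∀ n : ℕ, (Real.log ((n:ℝ)+2))⁻¹ * ((3*M*Real.log ((n:ℝ)+2) + C0) * R)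
      ≤ (3*M + C0/Real.log 2) * R := by
    intro n
    have e : (Real.log ((n:ℝ)+2))⁻¹ * ((3*M*Real.log ((n:ℝ)+2) + C0) * R)
        = (3*M + C0/Real.log ((n:ℝ)+2)) * R := by
      field_simp [(hLpos n).ne']; try ring
    rw [e]
    have h4 : C0/Real.log ((n:ℝ)+2) ≤ C0/Real.log 2 :=
      div_le_div_of_nonneg_left hC0nn hlog2 (hL n)
    nlinarith
  have hxb : ∀ n, ‖xs n‖ ≤ (3*M + C0/Real.log 2) * R := by
    intro n
    rw [hxrw n, norm_mul, hcnorm n]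
    refine le_trans ?_ (hfinb n)
    apply mul_le_mul_of_nonneg_left _ (inv_nonneg.2 (hLpos n).le)
    refine le_trans (hnormtsum n X (hX0 n) (hkeyX n).1 (hsumXC n)) ?_
    exact mul_le_mul_of_nonneg_right (hkeyX n).2 hR
  have hyrw : ∀ n, ys n = (((Real.log ((n : ℝ) + 2))⁻¹ : ℝ) : ℂ) *
      ∑' k : ℕ, ((Y n k : ℝ) : ℂ) * a k := by
    intro n
    simp only [hysdef, hYdef]
  have hyb : ∀ n, ‖ys n‖ ≤ (3*M + C0/Real.log 2) * R := by
    intro n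
    rw [hyrw n, norm_mul, hcnorm n]
    refine le_trans ?_ (hfinb n)
    apply mul_le_mul_of_nonneg_left _ (inv_nonneg.2 (hLpos n).le)
    refine le_trans (hnormtsum n Y (hY0 n) (hkeyY n).1 (hsumYC n)) ?_
    exact mul_le_mul_of_nonneg_right (hkeyY n).2 hR
  refine ⟨⟨_, hxb⟩, ⟨_, hyb⟩, ?_⟩
  -- difference bound
  have hdiff : ∀ n, ‖xs n - ys n‖ ≤ R * D n := by
    intro n
    have e1 : xs n - ys n = (((Real.log ((n : ℝ) + 2))⁻¹ : ℝ) : ℂ) *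
        ∑' k, (((X n k - Y n k : ℝ)) : ℂ) * a k := by
      rw [hxrw n, hyrw n, ← mul_sub]
      congr 1
      rw [← Summable.tsum_sub (hsumXC n) (hsumYC n)]
      refine tsum_congr (fun k => ?_)
      rw [Complex.ofReal_sub, sub_mul]
    rw [e1, norm_mul, hcnorm n]
    have hsubs : Summable (fun k => X n k - Y n k) := (hkeyX n).1.sub (hkeyY n).1
    have hsubsc : Summable (fun k => (((X n k - Y n k : ℝ)) : ℂ) * a k) := by
      apply Summable.of_norm
      refine Summable.of_nonneg_of_le (fun k => norm_nonneg _) (fun k => ?_) (hsubs.mul_right R)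
      rw [norm_mul, Complex.norm_real, Real.norm_of_nonneg (sub_nonneg.2 (hYX n k))]
      exact mul_le_mul_of_nonneg_left (ha k) (sub_nonneg.2 (hYX n k))
    have h2 := hnormtsum n (fun n k => X n k - Y n k) (fun k => sub_nonneg.2 (hYX n k)) hsubs hsubsc
    calc (Real.log ((n:ℝ)+2))⁻¹ * ‖∑' k, (((X n k - Y n k : ℝ)) : ℂ) * a k‖
        ≤ (Real.log ((n:ℝ)+2))⁻¹ * ((∑' k, (X n k - Y n k)) * R) :=
          mul_le_mul_of_nonneg_left h2 (inv_nonneg.2 (hLpos n).le)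
      _ = R * D n := by rw [hDdef]; ring
  -- real and imaginary parts
  have hxsbdd : BddSeq (fun n => (xs n).re) := ⟨(3*M + C0/Real.log 2) * R, fun n =>
    le_trans (Complex.abs_re_le_norm (xs n)) (hxb n)⟩
  have hysbdd : BddSeq (fun n => (ys n).re) := ⟨(3*M + C0/Real.log 2) * R, fun n =>
    le_trans (Complex.abs_re_le_norm (ys n)) (hyb n)⟩
  have hxsbddi : BddSeq (fun n => (xs n).im) := ⟨(3*M + C0/Real.log 2) * R, fun n =>
    le_trans (Complex.abs_im_le_norm (xs n)) (hxb n)⟩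
  have hysbddi : BddSeq (fun n => (ys n).im) := ⟨(3*M + C0/Real.log 2) * R, fun n =>
    le_trans (Complex.abs_im_le_norm (ys n)) (hyb n)⟩
  have hre : ω (fun n => (xs n).re) = ω (fun n => (ys n).re) := by
    have hd : ∀ n, |(xs n).re - (ys n).re| ≤ R * D n := fun n => by
      have h0 := Complex.abs_re_le_norm (xs n - ys n)
      rw [Complex.sub_re] at h0
      exact le_trans h0 (hdiff n)
    have h1 : |ω ((fun n => (xs n).re) - (fun n => (ys n).re))| ≤ R * ω D :=
      omega_abs_le hω R (bdd_sub hxsbdd hysbdd) hDbdd (fun n => hd n)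
    rw [omega_sub hω hxsbdd hysbdd, hωD, mul_zero] at h1
    have h2 := abs_eq_zero.1 (le_antisymm h1 (abs_nonneg _))
    linarith [sub_eq_zero.1 h2]
  have him : ω (fun n => (xs n).im) = ω (fun n => (ys n).im) := by
    have hd : ∀ n, |(xs n).im - (ys n).im| ≤ R * D n := fun n => by
      have h0 := Complex.abs_im_le_norm (xs n - ys n)
      rw [Complex.sub_im] at h0
      exact le_trans h0 (hdiff n)
    have h1 : |ω ((fun n => (xs n).im) - (fun n => (ys n).im))| ≤ R * ω D :=
      omega_abs_le hω R (bdd_sub hxsbddi hysbddi) hDbdd (fun n => hd n)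
    rw [omega_sub hω hxsbddi hysbddi, hωD, mul_zero] at h1
    have h2 := abs_eq_zero.1 (le_antisymm h1 (abs_nonneg _))
    linarith [sub_eq_zero.1 h2]
  unfold extC
  rw [hre, him]

end ST7

/-- For a dilation invariant extended limit `ω`, `α > 1`, a bounded
operator `A` and a positive compact `V ∈ M_{1,∞}` with eigenbasis `(e_k)`, the sequences
`x` and `y` above are bounded and `ω(x) = ω(y)`. -/
theorem stmt7 (ω : (ℕ → ℝ) → ℝ) (hω : ExtLimit ω) (α : ℝ) (hα : 1 < α)
    (A V : H →L[ℂ] H) (hV : MemM1inf V) (hVpos : V.IsPositive)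
    (e : HilbertBasis ℕ ℂ H)
    (hVe : ∀ k : ℕ, V (e k) = ((mu V k : ℝ) : ℂ) • e k) :
    (∃ M : ℝ, ∀ n : ℕ, ‖heatSeq A V e α n‖ ≤ M) ∧
    (∃ M : ℝ, ∀ n : ℕ, ‖cutSeq A V e n‖ ≤ M) ∧
    extC ω (heatSeq A V e α) = extC ω (cutSeq A V e) := by
  obtain ⟨-, M, hps⟩ := hV
  have hS0 : ∀ k, 0 ≤ mu V k := fun k => ST7MU.mu_nonneg V k
  have hanti : ∀ {k l : ℕ}, k ≤ l → mu V l ≤ mu V k := fun h => ST7MU.mu_antitone V h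
  have ha : ∀ k, ‖⟪A (e k), e k⟫_ℂ‖ ≤ ‖A‖ := by
    intro k
    have h1 : ‖⟪A (e k), e k⟫_ℂ‖ ≤ ‖A (e k)‖ * ‖e k‖ := norm_inner_le_norm _ _
    have h2 : ‖e k‖ = 1 := e.orthonormal.1 k
    have h3 : ‖A (e k)‖ ≤ ‖A‖ * ‖e k‖ := A.le_opNorm _
    rw [h2] at h1 h3
    simpa using le_trans h1 (by simpa using h3)
  exact ST7.main ω hω α hα (mu V) M hS0 hanti hps (fun k => ⟪A (e k), e k⟫_ℂ) ‖A‖ ha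

end
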